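/- For μ < 0 and q > 0, the function μ ↦ (1/2) ∫₀^∞ e^{μ t} (exp(−q²/(4t)) − 1) dt equals ∂_μ [ log √(−μ) + K₀(√(−μ) q) ]. -/

import Mathlib

/-- The Macdonald function (modified Bessel function of the second kind of order 0),
defined for `t > 0` by `K₀(t) = ∫₀^∞ exp(-t cosh s) ds`. -/
noncomputable def besselK0 (t : ℝ) : ℝ :=
  ∫ s in Set.Ioi (0 : ℝ), Real.exp (-t * Real.cosh s)

open MeasureTheory Real Set Filter

/-- integrability of functions dominated by `C * exp (ν t)` on `Ioi 0` for `ν < 0`. -/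
lemma integrableOn_of_exp_bound {ν : ℝ} (hν : ν < 0) {g : ℝ → ℝ} {C : ℝ}
    (hmeas : AEStronglyMeasurable g (volume.restrict (Ioi 0)))
    (hbound : ∀ t ∈ Ioi (0 : ℝ), ‖g t‖ ≤ C * Real.exp (ν * t)) :
    IntegrableOn g (Ioi 0) := by
  have hint : IntegrableOn (fun t => C * Real.exp (ν * t)) (Ioi 0) := by
    have := (exp_neg_integrableOn_Ioi 0 (neg_pos.mpr hν)).const_mul C
    simpa [neg_mul, neg_neg, IntegrableOn] using this
  refine Integrable.mono' hint hmeas ?_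
  filter_upwards [ae_restrict_mem measurableSet_Ioi] with t ht
  exact hbound t ht

lemma exp_div_le {a t : ℝ} (ha : 0 < a) (ht : 0 < t) :
    Real.exp (-(a / t)) / t ≤ 1 / a := by
  have h1 : a / t ≤ Real.exp (a / t) :=
    (le_add_of_nonneg_right zero_le_one).trans (Real.add_one_le_exp _)
  have h2 : Real.exp (-(a / t)) = 1 / Real.exp (a / t) := by
    rw [Real.exp_neg]; ring
  rw [h2, div_div]
  rw [div_le_div_iff₀ (by positivity) ha]
  have : a / t * t ≤ Real.exp (a / t) * t := by
    exact mul_le_mul_of_nonneg_right h1 ht.le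
  calc (1 : ℝ) * a = a / t * t := by field_simp
    _ ≤ Real.exp (a / t) * t := this
    _ = 1 * (Real.exp (a / t) * t) := (one_mul _).symm

/-- The key integral representation:
`K₀(√(-ν) q) = (1/2) ∫₀^∞ exp(ν t - q²/(4t)) / t dt`. -/
lemma besselK0_rep {ν q : ℝ} (hν : ν < 0) (hq : 0 < q) :
    besselK0 (Real.sqrt (-ν) * q)
      = (1 / 2) * ∫ t in Ioi (0 : ℝ), Real.exp (ν * t - q ^ 2 / (4 * t)) / t := by
  set a : ℝ := Real.sqrt (-ν) with ha
  have ha0 : 0 < a := Real.sqrt_pos.mpr (by linarith)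
  have ha2 : a ^ 2 = -ν := Real.sq_sqrt (by linarith)
  set c : ℝ := q / (2 * a) with hc
  have hc0 : 0 < c := by positivity
  -- the substitution map
  set f : ℝ → ℝ := fun u => c * Real.exp u with hf
  have himage : f '' univ = Ioi 0 := by
    rw [image_univ]
    ext t
    constructor
    · rintro ⟨u, rfl⟩
      exact mul_pos hc0 (Real.exp_pos u)
    · intro ht
      exact ⟨Real.log (t / c), by
        simp only [f, Real.exp_log (div_pos ht hc0)]
        field_simp⟩
  have hderiv : ∀ u ∈ (univ : Set ℝ), HasDerivWithinAt f (c * Real.exp u) univ u :=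
    fun u _ => ((Real.hasDerivAt_exp u).const_mul c).hasDerivWithinAt
  have hinj : InjOn f univ := by
    intro u _ v _ h
    simpa [f, Real.exp_eq_exp, hc0.ne'] using h
  have hsub := integral_image_eq_integral_abs_deriv_smul (MeasurableSet.univ)
    hderiv hinj (fun t => Real.exp (ν * t - q ^ 2 / (4 * t)) / t)
  rw [himage] at hsub
  -- simplify the substituted integrand
  have hintegrand : ∀ u : ℝ,
      |c * Real.exp u| • (Real.exp (ν * f u - q ^ 2 / (4 * f u)) / f u)
        = Real.exp (-(a * q) * Real.cosh u) := by
    intro u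
    have he : (0 : ℝ) < Real.exp u := Real.exp_pos u
    have hfu : (0 : ℝ) < f u := mul_pos hc0 he
    rw [smul_eq_mul, abs_of_pos hfu]
    rw [show f u * (Real.exp (ν * f u - q ^ 2 / (4 * f u)) / f u)
        = Real.exp (ν * f u - q ^ 2 / (4 * f u)) by field_simp]
    congr 1
    rw [Real.cosh_eq]
    have hexp : Real.exp (-u) = (Real.exp u)⁻¹ := Real.exp_neg u
    simp only [f, hc, hexp]
    have haν : ν = -(a ^ 2) := by rw [ha2]; ring
    rw [haν]
    field_simp
    ring
  simp only [hintegrand] at hsub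
  rw [Measure.restrict_univ] at hsub
  -- symmetrization: `∫ u : ℝ, exp (-x cosh u) = 2 * ∫ u in Ioi 0, exp (-x cosh u)`
  have hsymm : (∫ u : ℝ, Real.exp (-(a * q) * Real.cosh u))
      = 2 * ∫ u in Ioi (0 : ℝ), Real.exp (-(a * q) * Real.cosh u) := by
    have := integral_comp_abs (f := fun u => Real.exp (-(a * q) * Real.cosh u))
    simp only [Real.cosh_abs] at this
    exact this
  rw [hsymm] at hsub
  rw [besselK0]
  linarith [hsub]

theorem deriv_log_add_besselK0 (q : ℝ) (hq : 0 < q) :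
    ∀ μ : ℝ, μ < 0 →
      HasDerivAt (fun ν : ℝ => Real.log (Real.sqrt (-ν)) + besselK0 (Real.sqrt (-ν) * q))
        ((1 / 2) * ∫ t in Set.Ioi (0 : ℝ),
          Real.exp (μ * t) * (Real.exp (-q ^ 2 / (4 * t)) - 1)) μ := by
  intro μ hμ
  -- abbreviations
  set F : ℝ → ℝ → ℝ := fun ν t => Real.exp (ν * t - q ^ 2 / (4 * t)) / t with hF
  set F' : ℝ → ℝ → ℝ := fun ν t => Real.exp (ν * t - q ^ 2 / (4 * t)) with hF'
  have hmeasF : ∀ ν : ℝ, AEStronglyMeasurable (F ν) (volume.restrict (Ioi 0)) := by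
    intro ν
    apply Measurable.aestronglyMeasurable
    fun_prop
  have hmeasF' : ∀ ν : ℝ, AEStronglyMeasurable (F' ν) (volume.restrict (Ioi 0)) := by
    intro ν
    apply Measurable.aestronglyMeasurable
    fun_prop
  -- bound for F
  have hFbound : ∀ ν < (0:ℝ), ∀ t ∈ Ioi (0:ℝ), ‖F ν t‖ ≤ (4 / q ^ 2) * Real.exp (ν * t) := by
    intro ν hν t ht
    have ht0 : (0:ℝ) < t := ht
    have h1 : F ν t = Real.exp (ν * t) * (Real.exp (-(q ^ 2 / 4 / t)) / t) := by
      simp only [F]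
      rw [show ν * t - q ^ 2 / (4 * t) = ν * t + -(q ^ 2 / 4 / t) by ring, Real.exp_add]
      ring
    rw [h1, norm_mul, Real.norm_eq_abs, Real.norm_eq_abs, abs_of_pos (Real.exp_pos _),
      abs_of_pos (by positivity)]
    have h2 : Real.exp (-(q ^ 2 / 4 / t)) / t ≤ 1 / (q ^ 2 / 4) :=
      exp_div_le (by positivity) ht0
    have h3 : (1:ℝ) / (q ^ 2 / 4) = 4 / q ^ 2 := by field_simp
    calc Real.exp (ν * t) * (Real.exp (-(q ^ 2 / 4 / t)) / t)
        ≤ Real.exp (ν * t) * (4 / q ^ 2) := by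
          apply mul_le_mul_of_nonneg_left _ (Real.exp_pos _).le
          rw [← h3]; exact h2
      _ = 4 / q ^ 2 * Real.exp (ν * t) := by ring
  have hFint : ∀ ν < (0:ℝ), IntegrableOn (F ν) (Ioi 0) := fun ν hν =>
    integrableOn_of_exp_bound hν (hmeasF ν) (hFbound ν hν)
  -- bound for F'
  have hF'bound : ∀ ν < (0:ℝ), ∀ t ∈ Ioi (0:ℝ), ‖F' ν t‖ ≤ 1 * Real.exp (ν * t) := by
    intro ν hν t ht
    have ht0 : (0:ℝ) < t := ht
    rw [Real.norm_eq_abs, abs_of_pos (Real.exp_pos _), one_mul]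
    apply Real.exp_le_exp.mpr
    have : (0:ℝ) ≤ q ^ 2 / (4 * t) := by positivity
    linarith
  have hF'int : ∀ ν < (0:ℝ), IntegrableOn (F' ν) (Ioi 0) := fun ν hν =>
    integrableOn_of_exp_bound hν (hmeasF' ν) (hF'bound ν hν)
  -- exp(μ t) integrable and its integral
  have hexpint : IntegrableOn (fun t => Real.exp (μ * t)) (Ioi 0) := by
    have := exp_neg_integrableOn_Ioi 0 (neg_pos.mpr hμ)
    simpa [neg_mul, neg_neg] using this
  have hexpval : (∫ t in Ioi (0:ℝ), Real.exp (μ * t)) = -1 / μ := by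
    have h := integral_comp_mul_left_Ioi (fun x => Real.exp (-x)) 0 (neg_pos.mpr hμ)
    simp only [mul_zero, smul_eq_mul, integral_exp_neg_Ioi, neg_zero, Real.exp_zero,
      mul_one] at h
    have h2 : ∀ t : ℝ, Real.exp (-(-μ * t)) = Real.exp (μ * t) := by intro t; ring_nf
    simp only [h2] at h
    rw [h, inv_neg]; ring
  -- derivative under the integral sign
  have hε : (0:ℝ) < -μ / 2 := by linarith
  have hball : ∀ ν ∈ Metric.ball μ (-μ / 2), ν < μ / 2 := by
    intro ν hν
    rw [Metric.mem_ball, Real.dist_eq, abs_lt] at hν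
    linarith
  have hkey := hasDerivAt_integral_of_dominated_loc_of_deriv_le
    (F := F) (F' := F') (x₀ := μ) (s := Metric.ball μ (-μ / 2))
    (bound := fun t => Real.exp (μ / 2 * t)) (Metric.ball_mem_nhds μ hε)
    (Filter.Eventually.of_forall fun ν => hmeasF ν)
    (hFint μ hμ) (hmeasF' μ)
    ?_ ?_ ?_
  · -- assemble everything
    obtain ⟨-, hderivInt⟩ := hkey
    -- derivative of `(1/2) log (-ν)`
    have hlog : HasDerivAt (fun ν : ℝ => (1/2) * Real.log (-ν)) (1 / (2 * μ)) μ := by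
      have h1 : HasDerivAt (fun ν : ℝ => -ν) (-1) μ := (hasDerivAt_id μ).neg
      have h2 := (Real.hasDerivAt_log (by linarith : -μ ≠ 0)).comp μ h1
      have h3 := h2.const_mul (1/2 : ℝ)
      refine h3.congr_deriv ?_
      ring
    have hsum := hlog.add (hderivInt.const_mul (1/2 : ℝ))
    -- the combined function eventually equals the goal function
    have hev : (fun ν : ℝ => (1/2) * Real.log (-ν) + (1/2) * ∫ t in Ioi (0:ℝ), F ν t)
        =ᶠ[nhds μ] (fun ν : ℝ =>
          Real.log (Real.sqrt (-ν)) + besselK0 (Real.sqrt (-ν) * q)) := by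
      have hopen : Iio (0:ℝ) ∈ nhds μ := Iio_mem_nhds hμ
      filter_upwards [hopen] with ν hν
      have hν' : ν < 0 := hν
      rw [besselK0_rep hν' hq, Real.log_sqrt (by linarith : (0:ℝ) ≤ -ν)]
      ring
    have hfinal := hsum.congr_of_eventuallyEq hev.symm
    refine hfinal.congr_deriv ?_
    -- compute the value of the derivative
    have hsplit : (∫ t in Ioi (0:ℝ), Real.exp (μ * t) * (Real.exp (-q ^ 2 / (4 * t)) - 1))
        = (∫ t in Ioi (0:ℝ), F' μ t) - ∫ t in Ioi (0:ℝ), Real.exp (μ * t) := by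
      rw [← integral_sub (hF'int μ hμ) hexpint]
      apply setIntegral_congr_fun measurableSet_Ioi
      intro t ht
      simp only [F']
      rw [mul_sub, mul_one, ← Real.exp_add]
      congr 2
      ring
    rw [hsplit, hexpval]
    ring
  · -- h_bound
    filter_upwards [ae_restrict_mem measurableSet_Ioi] with t ht
    intro ν hν
    have hν2 : ν < μ / 2 := hball ν hν
    have ht0 : (0:ℝ) < t := ht
    rw [Real.norm_eq_abs, abs_of_pos (Real.exp_pos _)]
    apply Real.exp_le_exp.mpr
    have h1 : ν * t ≤ μ / 2 * t := mul_le_mul_of_nonneg_right hν2.le ht0.le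
    have h2 : (0:ℝ) ≤ q ^ 2 / (4 * t) := by positivity
    linarith
  · -- bound integrable
    have : IntegrableOn (fun t => Real.exp (μ / 2 * t)) (Ioi 0) := by
      have := exp_neg_integrableOn_Ioi 0 (by linarith : (0:ℝ) < -(μ / 2))
      simpa [neg_mul, neg_neg] using this
    exact this
  · -- h_diff
    filter_upwards [ae_restrict_mem measurableSet_Ioi] with t ht
    intro ν hν
    have ht0 : (0:ℝ) < t := ht
    have h1 : HasDerivAt (fun ν : ℝ => ν * t - q ^ 2 / (4 * t)) t ν := by
      simpa using ((hasDerivAt_id ν).mul_const t).sub_const (q ^ 2 / (4 * t))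
    have h2 := (h1.exp).div_const t
    have h3 : Real.exp (ν * t - q ^ 2 / (4 * t)) * t / t
        = Real.exp (ν * t - q ^ 2 / (4 * t)) := by
      field_simp
    rw [h3] at h2
    exact h2
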